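/- Let q be a complex number and let z be a complex number that is not an integer. Define F(w) := Σ_{l=0}^{∞} (q^l / l!) · Γ(w − l) for every complex w that is not an integer (the series converges absolutely). Then F(z + 1) + q · F(z − 1) = z · F(z). -/

import Mathlib

open Complex Filter

/-- Three-term difference equation (quantum spectral curve) for
`F(w) = Σ_{l≥0} (q^l / l!) Γ(w − l)`: one has `F(z+1) + q·F(z−1) = z·F(z)`. -/
theorem stmt3 (q z : ℂ) (hz : ∀ m : ℤ, z ≠ m)
    (F : ℂ → ℂ)
    (hF : ∀ w : ℂ, (∀ m : ℤ, w ≠ m) →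
      F w = ∑' l : ℕ, q ^ l / (l.factorial : ℂ) * Complex.Gamma (w - l)) :
    F (z + 1) + q * F (z - 1) = z * F z := by
  set b : ℕ → ℂ := fun l => q ^ l / (l.factorial : ℂ) * Complex.Gamma (z - l) with hbdef
  have hzl : ∀ l : ℕ, z - (l : ℂ) ≠ 0 := by
    intro l h
    exact hz l (by push_cast; exact sub_eq_zero.mp h)
  -- recurrence
  have hrec : ∀ l : ℕ, b (l + 1) = q / (((l : ℂ) + 1) * (z - ((l : ℂ) + 1))) * b l := by
    intro l
    have h1 : z - ((l : ℂ) + 1) ≠ 0 := by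
      have := hzl (l + 1); push_cast at this ⊢; exact this
    have hg : Complex.Gamma (z - l) = (z - ((l:ℂ) + 1)) * Complex.Gamma (z - ((l:ℂ) + 1)) := by
      have := Complex.Gamma_add_one _ h1
      rw [← this]; ring_nf
    have hfac : ((l + 1).factorial : ℂ) = ((l:ℂ) + 1) * (l.factorial : ℂ) := by
      push_cast [Nat.factorial_succ]; ring
    have hl1 : ((l:ℂ) + 1) ≠ 0 := Nat.cast_add_one_ne_zero l
    have hfacne : (l.factorial : ℂ) ≠ 0 := Nat.cast_ne_zero.mpr l.factorial_ne_zero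
    simp only [hbdef]
    push_cast
    rw [hg, hfac]
    field_simp
    ring
  have hnormrec : ∀ l : ℕ,
      ‖b (l + 1)‖ = ‖q‖ / (((l : ℝ) + 1) * ‖z - ((l : ℂ) + 1)‖) * ‖b l‖ := by
    intro l
    rw [hrec l, norm_mul, norm_div, norm_mul]
    congr 3
    have : ((l:ℂ) + 1) = ((l + 1 : ℕ) : ℂ) := by push_cast; ring
    rw [this, Complex.norm_natCast]; push_cast; ring
  set h : ℕ → ℝ := fun l => ((l : ℝ) + 1) * ‖b l‖ with hhdef
  have hsummh : Summable h := by
    obtain ⟨N, hN⟩ := exists_nat_ge (2 * ‖z‖ + 4 * ‖q‖ + 2)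
    apply summable_of_ratio_norm_eventually_le (r := 1/2) (by norm_num)
    filter_upwards [eventually_ge_atTop N] with l hl
    have hL : (N : ℝ) ≤ (l : ℝ) := by exact_mod_cast hl
    have hLb : 2 * ‖z‖ + 4 * ‖q‖ + 2 ≤ (l : ℝ) := le_trans hN hL
    have hD : ((l : ℝ) + 1) - ‖z‖ ≤ ‖z - ((l:ℂ) + 1)‖ := by
      have h1 : ‖((l:ℂ) + 1)‖ - ‖z‖ ≤ ‖((l:ℂ) + 1) - z‖ := norm_sub_norm_le _ _
      have h2 : ‖((l:ℂ) + 1)‖ = (l : ℝ) + 1 := by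
        have : ((l:ℂ) + 1) = ((l + 1 : ℕ) : ℂ) := by push_cast; ring
        rw [this, Complex.norm_natCast]; push_cast; ring
      rw [norm_sub_rev]; rw [h2] at h1; linarith
    have hDpos : 0 < ‖z - ((l:ℂ) + 1)‖ := by
      apply norm_pos_iff.mpr
      have := hzl (l + 1); push_cast at this ⊢; exact this
    set D := ‖z - ((l:ℂ) + 1)‖
    set B := ‖b l‖
    set Q := ‖q‖
    set L := (l : ℝ)
    have hBnn : 0 ≤ B := norm_nonneg _
    have hQnn : 0 ≤ Q := norm_nonneg _
    have hznn : 0 ≤ ‖z‖ := norm_nonneg _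
    have hh1 : h (l + 1) = (L + 2) * (Q / ((L + 1) * D) * B) := by
      simp only [hhdef, hnormrec l]; push_cast; ring
    have hh2 : h l = (L + 1) * B := rfl
    rw [Real.norm_of_nonneg, Real.norm_of_nonneg, hh1, hh2]
    · have hL0 : (0:ℝ) ≤ L := Nat.cast_nonneg l
      have hcoef : (L + 2) * Q ≤ 1/2 * ((L + 1)^2 * D) := by
        have hDD : 1/2 * (L + 1)^2 * ((L + 1) - ‖z‖) ≤ 1/2 * (L + 1)^2 * D :=
          mul_le_mul_of_nonneg_left hD (by positivity)
        nlinarith [mul_nonneg hznn hQnn, sq_nonneg (L + 1), mul_nonneg hL0 hQnn,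
          mul_nonneg (mul_nonneg hL0 hL0) hQnn, mul_nonneg (mul_nonneg hL0 hL0) hL0,
          mul_nonneg hL0 hznn]
      have heq1 : (L + 2) * (Q / ((L + 1) * D) * B) = ((L + 2) * Q * B) / ((L + 1) * D) := by
        ring
      have hLDpos : 0 < (L + 1) * D := by positivity
      have heq2 : 1/2 * ((L + 1) * B) = (1/2 * ((L + 1)^2 * D) * B) / ((L + 1) * D) := by
        field_simp
      rw [heq1, heq2, div_le_div_iff_of_pos_right hLDpos]
      exact mul_le_mul_of_nonneg_right hcoef hBnn
    · exact mul_nonneg (by positivity) (norm_nonneg _)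
    · exact mul_nonneg (by positivity) (norm_nonneg _)
  have hsum_lb : Summable (fun l : ℕ => (l : ℂ) * b l) := by
    rw [← summable_norm_iff]
    apply Summable.of_nonneg_of_le (fun l => norm_nonneg _) _ hsummh
    intro l
    rw [norm_mul, Complex.norm_natCast]
    have : (l : ℝ) ≤ (l : ℝ) + 1 := by linarith
    exact mul_le_mul_of_nonneg_right this (norm_nonneg _)
  have hsum_b : Summable b := by
    rw [← summable_norm_iff]
    apply Summable.of_nonneg_of_le (fun l => norm_nonneg _) _ hsummh
    intro l
    show ‖b l‖ ≤ ((l : ℝ) + 1) * ‖b l‖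
    nlinarith [norm_nonneg (b l), (Nat.cast_nonneg l : (0:ℝ) ≤ l)]
  have hsum_zb : Summable (fun l : ℕ => (z - (l : ℂ)) * b l) := by
    have := (hsum_b.mul_left z).sub hsum_lb
    apply this.congr
    intro l; ring
  have hz1 : ∀ m : ℤ, z + 1 ≠ (m : ℂ) := by
    intro m hm
    exact hz (m - 1) (by push_cast; linear_combination hm)
  have hzm1 : ∀ m : ℤ, z - 1 ≠ (m : ℂ) := by
    intro m hm
    exact hz (m + 1) (by push_cast; linear_combination hm)
  have hFz1 : F (z + 1) = ∑' l : ℕ, (z - (l : ℂ)) * b l := by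
    rw [hF _ hz1]
    apply tsum_congr
    intro l
    have hg : Complex.Gamma (z + 1 - l) = (z - l) * Complex.Gamma (z - l) := by
      have := Complex.Gamma_add_one (z - l) (hzl l)
      rw [← this]; ring_nf
    simp only [hbdef]; rw [hg]; ring
  have hq : q * F (z - 1) = ∑' l : ℕ, (l : ℂ) * b l := by
    rw [hF _ hzm1, ← tsum_mul_left]
    have hfun : (fun l : ℕ => q * (q ^ l / (l.factorial : ℂ) * Complex.Gamma (z - 1 - l)))
        = fun l : ℕ => ((l : ℂ) + 1) * b (l + 1) := by
      funext l
      have hfacne : (l.factorial : ℂ) ≠ 0 := Nat.cast_ne_zero.mpr l.factorial_ne_zero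
      have hl1 : ((l:ℂ) + 1) ≠ 0 := Nat.cast_add_one_ne_zero l
      simp only [hbdef]
      push_cast [Nat.factorial_succ]
      have harg : z - 1 - (l:ℂ) = z - ((l:ℂ) + 1) := by ring
      rw [harg]
      field_simp
      ring
    rw [hfun, Summable.tsum_eq_zero_add hsum_lb]
    push_cast
    simp
  rw [hFz1, hq, hF z hz, ← hbdef, ← Summable.tsum_add hsum_zb hsum_lb, ← tsum_mul_left]
  apply tsum_congr
  intro l
  ring
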